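/- Suppose Algorithm SCGLED converges: i.e., V*' is a fixed point of the one-step Oja update with matrix −F*' where F*' = Xᵀ F(XV*')X, the columns of V*' are orthonormal, and X satisfies Xᵀ S X = I. Then V* = XV*' satisfies the generalized eigenvalue equation F(V*)V* = S V* Λ for some diagonal matrix Λ. -/

import Mathlib

open Matrix

open Submodule in
private lemma aux_expand {N k : ℕ} (v : Fin k → EuclideanSpace ℝ (Fin N))
    (h : Orthonormal ℝ v) {x : EuclideanSpace ℝ (Fin N)}
    (hx : x ∈ span ℝ (Set.range v)) :
    x = ∑ l, (inner ℝ (v l) x : ℝ) • v l := by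
  induction hx using Submodule.span_induction with
  | mem y hy =>
      obtain ⟨j, rfl⟩ := hy
      rw [Finset.sum_eq_single j]
      · rw [(orthonormal_iff_ite.mp h) j j]; simp
      · intro l _ hl
        rw [(orthonormal_iff_ite.mp h) l j]
        simp [hl]
      · simp
  | zero => simp
  | add y z hy hz ihy ihz =>
      conv_lhs => rw [ihy, ihz]
      simp [inner_add_right, add_smul, Finset.sum_add_distrib]
  | smul a y hy ih =>
      conv_lhs => rw [ih]
      simp [inner_smul_right, Finset.smul_sum, smul_smul]

open Submodule in
private lemma aux_orth {N k : ℕ} (v : Fin k → EuclideanSpace ℝ (Fin N))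
    (h : Orthonormal ℝ v) {i l : Fin k} (hil : i < l) {x : EuclideanSpace ℝ (Fin N)}
    (hx : x ∈ span ℝ (v '' Set.Iic i)) :
    (inner ℝ (v l) x : ℝ) = 0 := by
  induction hx using Submodule.span_induction with
  | mem y hy =>
      obtain ⟨j, hj, rfl⟩ := hy
      rw [(orthonormal_iff_ite.mp h) l j]
      have : l ≠ j := fun hlj => absurd (hlj ▸ hj) (not_le.mpr hil)
      simp [this]
  | zero => simp
  | add y z hy hz ihy ihz => simp [inner_add_right, ihy, ihz]
  | smul a y hy ih => simp [inner_smul_right, ih]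

theorem stmt_15 (N k : ℕ)
    (F : Matrix (Fin N) (Fin k) ℝ → Matrix (Fin N) (Fin N) ℝ)
    (hFsymm : ∀ V, (F V).IsSymm)
    (S X : Matrix (Fin N) (Fin N) ℝ)
    (hSsymm : S.IsSymm) (hSpd : S.PosDef)
    (hX : IsUnit X) (hXS : Xᵀ * S * X = 1)
    (η : ℝ) (hη : 0 < η)
    (v' : Fin k → EuclideanSpace ℝ (Fin N))
    (hortho : Orthonormal ℝ v')
    (V' : Matrix (Fin N) (Fin k) ℝ) (hV' : V' = Matrix.of fun n i => v' i n)
    (M : Matrix (Fin N) (Fin N) ℝ) (hMdef : M = -(Xᵀ * F (X * V') * X))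
    (hfix : @InnerProductSpace.gramSchmidtNormed ℝ (EuclideanSpace ℝ (Fin N)) _ _ _ (Fin k) _ _
        (inferInstance : WellFoundedLT (Fin k))
        (fun i => v' i + η • (WithLp.equiv 2 (Fin N → ℝ)).symm (M.mulVec (v' i))) = v') :
    ∃ Λ : Fin k → ℝ,
      F (X * V') * (X * V') = S * (X * V') * Matrix.diagonal Λ := by
  classical
  set W := X * V' with hW
  set g : Fin k → EuclideanSpace ℝ (Fin N) :=
    fun i => (WithLp.equiv 2 (Fin N → ℝ)).symm (M.mulVec (v' i)) with hg
  set f : Fin k → EuclideanSpace ℝ (Fin N) := fun i => v' i + η • g i with hfdef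
  have hfix' : @InnerProductSpace.gramSchmidtNormed ℝ (EuclideanSpace ℝ (Fin N)) _ _ _ (Fin k) _ _
      (inferInstance : WellFoundedLT (Fin k)) f = v' := hfix
  -- step 1: g i lies in the span of v' '' Iic i
  have hmem : ∀ i, g i ∈ Submodule.span ℝ (v' '' Set.Iic i) := by
    intro i
    have h1 := @InnerProductSpace.mem_span_gramSchmidt ℝ (EuclideanSpace ℝ (Fin N)) _ _ _ (Fin k) _ _
      (inferInstance : WellFoundedLT (Fin k)) f i i (le_refl i)
    have hsp := @InnerProductSpace.span_gramSchmidtNormed ℝ (EuclideanSpace ℝ (Fin N)) _ _ _ (Fin k) _ _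
      (inferInstance : WellFoundedLT (Fin k)) f (Set.Iic i)
    rw [← hsp, hfix'] at h1
    have h2 : v' i ∈ Submodule.span ℝ (v' '' Set.Iic i) :=
      Submodule.subset_span ⟨i, Set.mem_Iic.mpr (le_refl i), rfl⟩
    have h3 : η • g i ∈ Submodule.span ℝ (v' '' Set.Iic i) := by
      have := Submodule.sub_mem _ h1 h2
      simpa [hfdef] using this
    have := Submodule.smul_mem _ η⁻¹ h3
    rwa [smul_smul, inv_mul_cancel₀ hη.ne', one_smul] at this
  set T : Matrix (Fin k) (Fin k) ℝ := V'ᵀ * M * V' with hT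
  -- T entries are inner products
  have hT_inner : ∀ l i, T l i = (inner ℝ (v' l) (g i) : ℝ) := by
    intro l i
    simp only [hT, Matrix.mul_apply, Matrix.transpose_apply, hV', Matrix.of_apply, hg,
      PiLp.inner_apply, RCLike.inner_apply, conj_trivial, WithLp.equiv_symm_apply, PiLp.toLp_apply,
      Matrix.mulVec, dotProduct]
    simp only [Finset.sum_mul, Finset.mul_sum]
    rw [Finset.sum_comm]
    exact Finset.sum_congr rfl fun a _ => Finset.sum_congr rfl fun b _ => by ring
  have hTtri : ∀ l i : Fin k, i < l → T l i = 0 := fun l i hil => by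
    rw [hT_inner]; exact aux_orth v' hortho hil (hmem i)
  have hMsymm : Mᵀ = M := by
    rw [hMdef]
    simp [Matrix.transpose_mul, Matrix.mul_assoc, (hFsymm W).eq]
  have hTsymm : ∀ l i, T l i = T i l := by
    intro l i
    have hTs : Tᵀ = T := by
      simp [hT, Matrix.transpose_mul, Matrix.mul_assoc, hMsymm]
    conv_lhs => rw [← hTs]
    exact T.transpose_apply l i
  have hTdiag : T = Matrix.diagonal (fun i => T i i) := by
    ext l i
    rcases eq_or_ne l i with rfl | hne
    · simp
    · rw [Matrix.diagonal_apply_ne _ hne]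
      rcases lt_or_gt_of_ne hne with h | h
      · rw [hTsymm]; exact hTtri i l h
      · exact hTtri l i h
  -- step 2: M * V' = V' * T
  have hMV : M * V' = V' * T := by
    ext n i
    have hx : g i ∈ Submodule.span ℝ (Set.range v') :=
      Submodule.span_mono (Set.image_subset_range _ _) (hmem i)
    have hexp := aux_expand v' hortho hx
    have hcoord : g i n = ∑ l, (inner ℝ (v' l) (g i) : ℝ) * v' l n := by
      have h4 := congrArg (WithLp.linearEquiv 2 ℝ (Fin N → ℝ)) hexp
      rw [map_sum] at h4
      simp only [_root_.map_smul] at h4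
      have h5 := congrFun h4 n
      simpa [WithLp.linearEquiv, Finset.sum_apply] using h5
    have hgn : g i n = (M * V') n i := by
      simp [hg, Matrix.mul_apply, Matrix.mulVec, dotProduct, hV']
    rw [← hgn, hcoord]
    simp only [Matrix.mul_apply, hV', Matrix.of_apply]
    exact Finset.sum_congr rfl fun l _ => by rw [hT_inner, mul_comm]
  refine ⟨fun l => -(T l l), ?_⟩
  have hVT : V' * T = -(V' * Matrix.diagonal fun l => -(T l l)) := by
    rw [← Matrix.mul_neg]
    congr 1
    rw [hTdiag]
    ext l i
    rcases eq_or_ne l i with rfl | hne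
    · simp
    · simp [Matrix.diagonal_apply_ne _ hne]
  -- invert X
  have hdet : IsUnit X.det := (Matrix.isUnit_iff_isUnit_det X).mp hX
  have hdetT : IsUnit Xᵀ.det := by rwa [Matrix.det_transpose]
  have h1 : Xᵀ * S = X⁻¹ := by
    calc Xᵀ * S = Xᵀ * S * (X * X⁻¹) := by rw [Matrix.mul_nonsing_inv X hdet, Matrix.mul_one]
    _ = (Xᵀ * S * X) * X⁻¹ := by rw [Matrix.mul_assoc (Xᵀ * S)]
    _ = X⁻¹ := by rw [hXS, Matrix.one_mul]
  have hSX : S * X = (Xᵀ)⁻¹ := by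
    have := congrArg Matrix.transpose h1
    simpa [Matrix.transpose_mul, hSsymm.eq, Matrix.transpose_nonsing_inv] using this
  have h2 : S * X * Xᵀ = 1 := by rw [hSX, Matrix.nonsing_inv_mul _ hdetT]
  -- key equation
  have key : Xᵀ * (F W * W) = V' * Matrix.diagonal fun l => -(T l l) := by
    have : Xᵀ * F W * X * V' = -(M * V') := by rw [hMdef]; simp
    rw [hMV, hVT, neg_neg] at this
    calc Xᵀ * (F W * W) = Xᵀ * F W * X * V' := by
          rw [hW, ← Matrix.mul_assoc, ← Matrix.mul_assoc]
    _ = V' * Matrix.diagonal fun l => -(T l l) := this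
  have final : F W * W = S * X * (Xᵀ * (F W * W)) := by
    rw [← Matrix.mul_assoc (S * X) Xᵀ (F W * W), h2, Matrix.one_mul]
  rw [final, key, hW]
  simp only [Matrix.mul_assoc]
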